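/- arXiv:1105.4687 — 2 statements merged into one kernel-verified Lean document; each statement's English description precedes it below -/
import Mathlib

section
/- The function $\beta(x) = \frac{|x|^{3/2} e^{-|x|}}{1+|x|^{3/2}}$ on $\mathbb{R}\setminus\{0\}$ is nonnegative, lies in $L^2(\mathbb{R})$, and satisfies for $x \neq 0$ the identity $-\beta''(x) + \frac{3}{4x^2}\beta(x) + \beta(x) = \frac{3|x|^{1/2}e^{-|x|}}{4(1+|x|^{3/2})^3}\left(|x|^2 + 4|x|^{3/2} + 7|x|^{1/2} + 4\right)$, and in particular the right-hand side is a nonnegative $L^2$ function. -/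
open MeasureTheory Real

noncomputable section

/-- The Kalf–Walter supersolution `β(x) = |x|^{3/2} e^{-|x|} / (1 + |x|^{3/2})`. -/
def kwBeta (x : ℝ) : ℝ := |x| ^ (3 / 2 : ℝ) * Real.exp (-|x|) / (1 + |x| ^ (3 / 2 : ℝ))

/-- The explicit right-hand side
`X(x) = (3 |x|^{1/2} e^{-|x|} / (4 (1+|x|^{3/2})³)) (|x|² + 4|x|^{3/2} + 7|x|^{1/2} + 4)`. -/
def kwX (x : ℝ) : ℝ :=
  3 * |x| ^ (1 / 2 : ℝ) * Real.exp (-|x|) / (4 * (1 + |x| ^ (3 / 2 : ℝ)) ^ 3) *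
    (|x| ^ 2 + 4 * |x| ^ (3 / 2 : ℝ) + 7 * |x| ^ (1 / 2 : ℝ) + 4)

open Set Filter

def kwH (x : ℝ) : ℝ := x ^ (3/2 : ℝ) / (1 + x ^ (3/2 : ℝ))
def kwH1 (x : ℝ) : ℝ := (3/2) * x ^ (1/2 : ℝ) / (1 + x ^ (3/2 : ℝ)) ^ 2
def kwH2 (x : ℝ) : ℝ :=
  (3/4) * x ^ (-(1/2) : ℝ) / (1 + x ^ (3/2 : ℝ)) ^ 2 - (9/2) * x / (1 + x ^ (3/2 : ℝ)) ^ 3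
def kwG (x : ℝ) : ℝ := Real.exp (-x) * kwH x
def kwG1 (x : ℝ) : ℝ := Real.exp (-x) * (kwH1 x - kwH x)
def kwG2 (x : ℝ) : ℝ := Real.exp (-x) * (kwH2 x - 2 * kwH1 x + kwH x)

lemma den_pos {x : ℝ} (hx : 0 ≤ x) : 0 < 1 + x ^ (3/2 : ℝ) := by positivity

lemma hasDerivAt_kwH {x : ℝ} (hx : 0 < x) : HasDerivAt kwH (kwH1 x) x := by
  have hu : HasDerivAt (fun y : ℝ => y ^ (3/2 : ℝ)) ((3/2) * x ^ (1/2 : ℝ)) x := by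
    have := Real.hasDerivAt_rpow_const (x := x) (p := (3/2 : ℝ)) (Or.inl hx.ne')
    convert this using 2
    norm_num
  have hd : (1 + x ^ (3/2 : ℝ)) ≠ 0 := (den_pos hx.le).ne'
  have := hu.div ((hasDerivAt_const x (1:ℝ)).add hu) hd
  refine this.congr_deriv ?_
  simp only [Pi.add_apply]
  unfold kwH1
  field_simp
  ring

lemma hasDerivAt_kwH1 {x : ℝ} (hx : 0 < x) : HasDerivAt kwH1 (kwH2 x) x := by
  have hs : HasDerivAt (fun y : ℝ => (3/2) * y ^ (1/2 : ℝ)) ((3/4) * x ^ (-(1/2) : ℝ)) x := by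
    have := (Real.hasDerivAt_rpow_const (x := x) (p := (1/2 : ℝ)) (Or.inl hx.ne')).const_mul
      (3/2 : ℝ)
    refine this.congr_deriv ?_
    rw [show (1/2 : ℝ) - 1 = -(1/2) by norm_num]
    ring
  have hu : HasDerivAt (fun y : ℝ => y ^ (3/2 : ℝ)) ((3/2) * x ^ (1/2 : ℝ)) x := by
    have := Real.hasDerivAt_rpow_const (x := x) (p := (3/2 : ℝ)) (Or.inl hx.ne')
    convert this using 2
    norm_num
  have hd : (1 + x ^ (3/2 : ℝ)) ≠ 0 := (den_pos hx.le).ne'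
  have hden := ((hasDerivAt_const x (1:ℝ)).add hu).pow 2
  have := hs.div hden (pow_ne_zero 2 hd)
  refine this.congr_deriv ?_
  simp only [Pi.add_apply, Pi.pow_apply]
  have h3 : x ^ (3/2 : ℝ) = (x ^ (1/2 : ℝ)) ^ 3 := by
    rw [← Real.rpow_natCast (x ^ (1/2 : ℝ)) 3, ← Real.rpow_mul hx.le]; norm_num
  have hneg : x ^ (-(1/2) : ℝ) = (x ^ (1/2 : ℝ))⁻¹ := by
    rw [Real.rpow_neg hx.le]
  have h2 : x = (x ^ (1/2 : ℝ)) ^ 2 := by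
    rw [← Real.rpow_natCast (x ^ (1/2 : ℝ)) 2, ← Real.rpow_mul hx.le]; norm_num
  have ht : 0 < x ^ (1/2 : ℝ) := Real.rpow_pos_of_pos hx _
  unfold kwH2
  set t := x ^ (1/2 : ℝ)
  rw [h3, hneg]
  rw [h2]
  have hd' : (1 + t ^ 3) ≠ 0 := by positivity
  field_simp
  ring

lemma hasDerivAt_exp_neg (x : ℝ) :
    HasDerivAt (fun y : ℝ => Real.exp (-y)) (-Real.exp (-x)) x := by
  simpa using ((hasDerivAt_id x).neg.exp)

lemma hasDerivAt_kwG {x : ℝ} (hx : 0 < x) : HasDerivAt kwG (kwG1 x) x := by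
  have := (hasDerivAt_exp_neg x).mul (hasDerivAt_kwH hx)
  refine this.congr_deriv ?_
  unfold kwG1; ring

lemma hasDerivAt_kwG1 {x : ℝ} (hx : 0 < x) : HasDerivAt kwG1 (kwG2 x) x := by
  have := (hasDerivAt_exp_neg x).mul ((hasDerivAt_kwH1 hx).sub (hasDerivAt_kwH hx))
  refine this.congr_deriv ?_
  simp only [Pi.sub_apply]
  unfold kwG2; ring

lemma kwBeta_eq_kwG {x : ℝ} (hx : 0 < x) : kwBeta x = kwG x := by
  unfold kwBeta kwG kwH; rw [abs_of_pos hx]; ring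

lemma ev_pos {x : ℝ} (hx : 0 < x) : kwBeta =ᶠ[nhds x] kwG := by
  filter_upwards [Ioi_mem_nhds hx] with y hy
  exact kwBeta_eq_kwG hy

lemma deriv2_pos {x : ℝ} (hx : 0 < x) : deriv (deriv kwBeta) x = kwG2 x := by
  have hev : deriv kwBeta =ᶠ[nhds x] kwG1 := by
    filter_upwards [Ioi_mem_nhds hx] with y hy
    rw [(ev_pos hy).deriv_eq]
    exact (hasDerivAt_kwG hy).deriv
  rw [hev.deriv_eq]
  exact (hasDerivAt_kwG1 hx).deriv

lemma ev_neg {x : ℝ} (hx : x < 0) : kwBeta =ᶠ[nhds x] fun y => kwG (-y) := by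
  filter_upwards [Iio_mem_nhds hx] with y hy
  unfold kwBeta kwG kwH; rw [abs_of_neg hy]; ring

lemma deriv2_neg {x : ℝ} (hx : x < 0) : deriv (deriv kwBeta) x = kwG2 (-x) := by
  have hev : deriv kwBeta =ᶠ[nhds x] fun y => -kwG1 (-y) := by
    filter_upwards [Iio_mem_nhds hx] with y hy
    rw [(ev_neg hy).deriv_eq]
    have := (hasDerivAt_kwG (x := -y) (neg_pos.2 hy)).comp y (hasDerivAt_neg y)
    simpa [Function.comp_def] using this.deriv
  rw [hev.deriv_eq]
  have := ((hasDerivAt_kwG1 (x := -x) (neg_pos.2 hx)).comp x (hasDerivAt_neg x)).neg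
  simpa [Function.comp_def] using this.deriv

lemma key_pos {x : ℝ} (hx : 0 < x) :
    -kwG2 x + 3 / (4 * x ^ 2) * kwG x + kwG x = kwX x := by
  have habs : |x| = x := abs_of_pos hx
  have h3 : x ^ (3/2 : ℝ) = (x ^ (1/2 : ℝ)) ^ 3 := by
    rw [← Real.rpow_natCast (x ^ (1/2 : ℝ)) 3, ← Real.rpow_mul hx.le]; norm_num
  have hneg : x ^ (-(1/2) : ℝ) = (x ^ (1/2 : ℝ))⁻¹ := by rw [Real.rpow_neg hx.le]
  have h2 : x = (x ^ (1/2 : ℝ)) ^ 2 := by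
    rw [← Real.rpow_natCast (x ^ (1/2 : ℝ)) 2, ← Real.rpow_mul hx.le]; norm_num
  have ht : 0 < x ^ (1/2 : ℝ) := Real.rpow_pos_of_pos hx _
  unfold kwG2 kwG kwX kwH kwH1 kwH2
  rw [habs]
  set t := x ^ (1/2 : ℝ)
  rw [h3, hneg]
  rw [h2]
  have hd' : (1 + t ^ 3) ≠ 0 := by positivity
  have hexp : Real.exp (-t ^ 2) ≠ 0 := Real.exp_ne_zero _
  field_simp
  ring

lemma poly_bound {s E : ℝ} (hs : 0 ≤ s) (hE1 : 1 ≤ E) (h12 : s ^ 12 ≤ 720 * E) :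
    (3 * s * E⁻¹ / (4 * (1 + s ^ 3) ^ 3) * ((s ^ 2) ^ 2 + 4 * s ^ 3 + 7 * s + 4)) ^ 2
      ≤ 103680 * E⁻¹ := by
  have hEpos : 0 < E := by linarith
  have hEi : 0 < E⁻¹ := by positivity
  have hD0 : (0:ℝ) < 1 + s ^ 3 := by positivity
  have hP0 : (0:ℝ) ≤ (s ^ 2) ^ 2 + 4 * s ^ 3 + 7 * s + 4 := by positivity
  have key : 9 * s ^ 2 * ((s ^ 2) ^ 2 + 4 * s ^ 3 + 7 * s + 4) ^ 2 ≤ 1658880 * E := by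
    rcases le_total s 1 with hs1 | hs1
    · have e2 : s ^ 2 ≤ 1 := by nlinarith
      have e3 : s ^ 3 ≤ 1 := by nlinarith
      have e4 : s ^ 4 ≤ 1 := by nlinarith
      have hPle : (s ^ 2) ^ 2 + 4 * s ^ 3 + 7 * s + 4 ≤ 16 := by nlinarith
      nlinarith
    · have e1 : s ^ 3 ≤ s ^ 4 := by nlinarith
      have e0 : s ≤ s ^ 4 := by nlinarith
      have hPle : (s ^ 2) ^ 2 + 4 * s ^ 3 + 7 * s + 4 ≤ 16 * s ^ 4 := by nlinarith
      have hsq : ((s ^ 2) ^ 2 + 4 * s ^ 3 + 7 * s + 4) ^ 2 ≤ 256 * s ^ 8 := by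
        nlinarith [mul_self_le_mul_self hP0 hPle]
      have h10 : 9 * s ^ 2 * ((s ^ 2) ^ 2 + 4 * s ^ 3 + 7 * s + 4) ^ 2 ≤ 2304 * s ^ 10 := by
        nlinarith [mul_le_mul_of_nonneg_left hsq (by positivity : (0:ℝ) ≤ 9 * s ^ 2)]
      have h11 : s ^ 10 ≤ s ^ 12 := by nlinarith
      nlinarith
  have expand : (3 * s * E⁻¹ / (4 * (1 + s ^ 3) ^ 3) * ((s ^ 2) ^ 2 + 4 * s ^ 3 + 7 * s + 4)) ^ 2
      = 9 * s ^ 2 * ((s ^ 2) ^ 2 + 4 * s ^ 3 + 7 * s + 4) ^ 2 * (E⁻¹ * E⁻¹)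
        / (16 * (1 + s ^ 3) ^ 6) := by
    field_simp
    ring
  rw [expand, div_le_iff₀ (by positivity)]
  have hD6 : 1 ≤ (1 + s ^ 3) ^ 6 := one_le_pow₀ (by nlinarith)
  have h7 : 9 * s ^ 2 * ((s ^ 2) ^ 2 + 4 * s ^ 3 + 7 * s + 4) ^ 2 * (E⁻¹ * E⁻¹)
      ≤ 1658880 * E * (E⁻¹ * E⁻¹) :=
    mul_le_mul_of_nonneg_right key (by positivity)
  have h8 : 1658880 * E * (E⁻¹ * E⁻¹) = 1658880 * E⁻¹ := by
    field_simp
  have h9 : 1658880 * E⁻¹ ≤ 103680 * E⁻¹ * (16 * (1 + s ^ 3) ^ 6) := by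
    nlinarith [mul_le_mul_of_nonneg_left hD6 (by positivity : (0:ℝ) ≤ 1658880 * E⁻¹)]
  linarith

lemma integrable_exp_neg_abs' : Integrable (fun x : ℝ => Real.exp (-|x|)) := by
  have h1 : IntegrableOn (fun x : ℝ => Real.exp (-|x|)) (Ioi 0) := by
    refine (exp_neg_integrableOn_Ioi 0 one_pos).congr_fun ?_ measurableSet_Ioi
    intro y hy
    show Real.exp (-1 * y) = Real.exp (-|y|)
    rw [abs_of_pos hy]; ring_nf
  rw [← integrableOn_univ, ← @Iio_union_Ici _ _ (0 : ℝ), integrableOn_union,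
    integrableOn_Ici_iff_integrableOn_Ioi]
  refine ⟨?_, h1⟩
  rw [← (Measure.measurePreserving_neg (volume : Measure ℝ)).integrableOn_comp_preimage
      (Homeomorph.neg ℝ).measurableEmbedding]
  simpa [Function.comp_def, neg_Iio, abs_neg] using h1

lemma kwBeta_nonneg (x : ℝ) : 0 ≤ kwBeta x := by unfold kwBeta; positivity
lemma kwX_nonneg (x : ℝ) : 0 ≤ kwX x := by unfold kwX; positivity

lemma kwBeta_meas : Measurable kwBeta := by unfold kwBeta; fun_prop
lemma kwX_meas : Measurable kwX := by unfold kwX; fun_prop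

lemma kwBeta_le (x : ℝ) : kwBeta x ≤ Real.exp (-|x|) := by
  unfold kwBeta
  rw [div_le_iff₀ (den_pos (abs_nonneg x))]
  have h1 : (0:ℝ) ≤ |x| ^ (3/2 : ℝ) := by positivity
  nlinarith [Real.exp_pos (-|x|)]

lemma memLp_kwBeta : MemLp kwBeta 2 (volume : Measure ℝ) := by
  rw [memLp_two_iff_integrable_sq kwBeta_meas.aestronglyMeasurable]
  refine Integrable.mono' integrable_exp_neg_abs' ((kwBeta_meas.pow_const 2).aestronglyMeasurable)
    (ae_of_all _ fun x => ?_)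
  have h1 := kwBeta_nonneg x
  have h2 := kwBeta_le x
  have h3 : Real.exp (-|x|) ≤ 1 := Real.exp_le_one_iff.2 (by simp)
  rw [Real.norm_eq_abs, abs_of_nonneg (by positivity)]
  nlinarith

lemma kwX_sq_le (x : ℝ) : kwX x ^ 2 ≤ 103680 * Real.exp (-|x|) := by
  have h3 : |x| ^ (3/2 : ℝ) = (|x| ^ (1/2 : ℝ)) ^ 3 := by
    rw [← Real.rpow_natCast (|x| ^ (1/2 : ℝ)) 3, ← Real.rpow_mul (abs_nonneg x)]; norm_num
  have h2 : |x| = (|x| ^ (1/2 : ℝ)) ^ 2 := by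
    rw [← Real.rpow_natCast (|x| ^ (1/2 : ℝ)) 2, ← Real.rpow_mul (abs_nonneg x)]; norm_num
  have ht : 0 ≤ |x| ^ (1/2 : ℝ) := by positivity
  unfold kwX
  rw [h3]
  generalize hg : |x| ^ (1/2 : ℝ) = s at h2 ht ⊢
  rw [h2, Real.exp_neg]
  refine poly_bound ht (Real.one_le_exp (by positivity)) ?_
  have hsum := Real.sum_le_exp_of_nonneg (x := s ^ 2) (by positivity) 7
  rw [Finset.sum_range_succ] at hsum
  have hnn : (0:ℝ) ≤ ∑ i ∈ Finset.range 6, (s ^ 2) ^ i / (Nat.factorial i) := by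
    positivity
  have h6 : ((s ^ 2) ^ 6) / (Nat.factorial 6) ≤ Real.exp (s ^ 2) := by
    linarith
  rw [show ((Nat.factorial 6 : ℕ) : ℝ) = 720 by norm_num [Nat.factorial]] at h6
  nlinarith

lemma memLp_kwX : MemLp kwX 2 (volume : Measure ℝ) := by
  rw [memLp_two_iff_integrable_sq kwX_meas.aestronglyMeasurable]
  refine Integrable.mono' (integrable_exp_neg_abs'.const_mul 103680)
    ((kwX_meas.pow_const 2).aestronglyMeasurable) (ae_of_all _ fun x => ?_)
  rw [Real.norm_eq_abs, abs_of_nonneg (by positivity)]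
  exact kwX_sq_le x

/-- The function `β` is nonnegative, lies in `L²(ℝ)`, and satisfies
`-β'' + (3/(4x²))β + β = X` for `x ≠ 0`, where `X` is nonnegative and in `L²`. -/
theorem stmt_11 :
    (∀ x : ℝ, 0 ≤ kwBeta x) ∧ MemLp kwBeta 2 (volume : Measure ℝ) ∧
    (∀ x : ℝ, x ≠ 0 →
      -deriv (deriv kwBeta) x + 3 / (4 * x ^ 2) * kwBeta x + kwBeta x = kwX x) ∧
    (∀ x : ℝ, 0 ≤ kwX x) ∧ MemLp kwX 2 (volume : Measure ℝ) := by
  refine ⟨kwBeta_nonneg, memLp_kwBeta, ?_, kwX_nonneg, memLp_kwX⟩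
  intro x hx
  rcases hx.lt_or_gt with h | h
  · rw [deriv2_neg h]
    have key := key_pos (neg_pos.2 h)
    have e1 : kwBeta x = kwG (-x) := by
      rw [← kwBeta_eq_kwG (neg_pos.2 h)]
      unfold kwBeta; rw [abs_neg]
    have e2 : kwX x = kwX (-x) := by unfold kwX; rw [abs_neg]
    rw [e1, e2, show x ^ 2 = (-x) ^ 2 by ring]
    exact key
  · rw [deriv2_pos h, kwBeta_eq_kwG h]
    exact key_pos h

end
end

section
/- If a densely defined operator $T$ on $L^2(M,d\omega)$ with domain $C^\infty_0(\Omega_-) \oplus C^\infty_0(\Omega_+)$ (where $\Omega = \Omega_- \sqcup \Omega_+$ is a disjoint union of open sets) is essentially self-adjoint, then its unique self-adjoint extension $\overline{T}$ preserves the orthogonal decomposition $L^2 = L^2(\Omega_-) \oplus^\perp L^2(\Omega_+)$, and consequently for any $u_0 \in L^2(\Omega_+)$ the solution $u(t) = e^{it\overline{T}}u_0$ of the abstract Schrödinger equation remains supported in $\Omega_+$ for all $t \in \mathbb{R}$. -/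
noncomputable section

open scoped ComplexConjugate

/-- Symmetry of a self-adjoint `LinearPMap`. -/
lemma selfAdjoint_symm {H : Type*} [NormedAddCommGroup H] [InnerProductSpace ℂ H]
    [CompleteSpace H] {A : H →ₗ.[ℂ] H} (hA : IsSelfAdjoint A) :
    ∀ x y : A.domain, (inner ℂ (A x) (y : H) : ℂ) = inner ℂ (x : H) (A y) := by
  intro x y
  have h' : A.adjoint = A := hA
  have hd : Dense (A.domain : Set H) := hA.dense_domain
  have hx : (x : H) ∈ A.adjoint.domain := by rw [h']; exact x.2
  have hle : A.adjoint ≤ A := le_of_eq h'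
  have key : A.adjoint ⟨(x : H), hx⟩ = A x := hle.2 rfl
  have := LinearPMap.adjoint_isFormalAdjoint hd ⟨(x : H), hx⟩ y
  rwa [key] at this

/-- Dynamical confinement: let `H = K₋ ⊕⊥ K₊` (with `K₋ = K₊ᗮ`), and let `T` be a densely
defined operator whose domain splits along the decomposition and which maps each part into
the corresponding subspace. If `T` is essentially self-adjoint, then its unique self-adjoint
extension `T̄` preserves the orthogonal decomposition, and every solution
`u' = i T̄ u` of the abstract Schrödinger equation starting in `K₊` stays in `K₊` forever. -/
theorem stmt_19 {H : Type*} [NormedAddCommGroup H] [InnerProductSpace ℂ H] [CompleteSpace H]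
    (Kp : Submodule ℂ H) (hKp : IsClosed (Kp : Set H))
    (T : H →ₗ.[ℂ] H)
    (hdense : Dense (T.domain : Set H))
    (hdom : T.domain = (T.domain ⊓ Kpᗮ) ⊔ (T.domain ⊓ Kp))
    (hinv : ∀ u : T.domain, ((u : H) ∈ Kp → T u ∈ Kp) ∧ ((u : H) ∈ Kpᗮ → T u ∈ Kpᗮ))
    (hessa : IsSelfAdjoint T.closure) :
    (∀ u : T.closure.domain, ((u : H) ∈ Kp → T.closure u ∈ Kp) ∧
      ((u : H) ∈ Kpᗮ → T.closure u ∈ Kpᗮ)) ∧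
    (∀ (u : ℝ → H) (hu : ∀ t, u t ∈ T.closure.domain),
      (∀ t, HasDerivAt u (Complex.I • T.closure ⟨u t, hu t⟩) t) →
      u 0 ∈ Kp → ∀ t, u t ∈ Kp) := by
  classical
  haveI : CompleteSpace Kp := hKp.completeSpace_coe
  -- the orthogonal projection onto Kp as a continuous linear map on H
  set P : H →L[ℂ] H := Kp.subtypeL.comp Kp.orthogonalProjection with hPdef
  have hPapp : ∀ x : H, P x = ((Kp.orthogonalProjection x : Kp) : H) := fun _ => rfl
  have hPmem : ∀ x : H, P x ∈ Kp := fun x => by rw [hPapp]; exact (Kp.orthogonalProjection x).2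
  have hPid : ∀ x ∈ Kp, P x = x := fun x hx => by
    rw [hPapp]; exact Kp.starProjection_eq_self_iff.mpr hx
  have hPzero : ∀ x ∈ Kpᗮ, P x = 0 := fun x hx => by
    rw [hPapp, Submodule.orthogonalProjectionOnto_apply_of_mem_orthogonal hx]
    simp
  have hPorth : ∀ x : H, x - P x ∈ Kpᗮ := fun x => by
    rw [hPapp]; exact Kp.sub_starProjection_mem_orthogonal x
  -- symmetry of T (from symmetry of its closure)
  have hsymmC := selfAdjoint_symm hessa
  have hle := T.le_closure
  have hsymm : ∀ x y : T.domain, (inner ℂ (T x) (y : H) : ℂ) = inner ℂ (x : H) (T y) := by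
    intro x y
    have hx : T x = T.closure ⟨(x : H), hle.1 x.2⟩ := hle.2 rfl
    have hy : T y = T.closure ⟨(y : H), hle.1 y.2⟩ := hle.2 rfl
    rw [hx, hy]
    exact hsymmC ⟨(x : H), hle.1 x.2⟩ ⟨(y : H), hle.1 y.2⟩
  -- T is closable
  have hgzero : ∀ x ∈ T.graph.topologicalClosure, x.1 = 0 → (x.2 : H) = 0 := by
    intro x hx hx1
    have hxc : x ∈ closure (T.graph : Set (H × H)) := by
      rwa [← SetLike.mem_coe, Submodule.topologicalClosure_coe] at hx
    refine hdense.eq_zero_of_inner_left ℂ fun z0 hz0 => ?_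
    obtain ⟨z, rfl⟩ : ∃ z : T.domain, (z : H) = z0 := ⟨⟨z0, hz0⟩, rfl⟩
    have hset : (T.graph : Set (H × H)) ⊆
        {p : H × H | (inner ℂ p.2 (z : H) : ℂ) = inner ℂ p.1 (T z)} := by
      intro p hp
      rcases (T.mem_graph_iff.mp hp) with ⟨y, hy1, hy2⟩
      simp only [Set.mem_setOf_eq, ← hy1, ← hy2]
      exact hsymm y z
    have hclosed : IsClosed {p : H × H | (inner ℂ p.2 (z : H) : ℂ) = inner ℂ p.1 (T z)} :=
      isClosed_eq (continuous_snd.inner continuous_const) (continuous_fst.inner continuous_const)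
    have := hclosed.closure_subset ((closure_mono hset) hxc)
    have hx2 : (inner ℂ x.2 (z : H) : ℂ) = inner ℂ x.1 (T z) := this
    rw [hx1, inner_zero_left] at hx2
    exact hx2
  have hclos : T.IsClosable :=
    ⟨T.graph.topologicalClosure.toLinearPMap, (Submodule.toLinearPMap_graph_eq _ hgzero).symm⟩
  have hgraph : T.closure.graph = T.graph.topologicalClosure :=
    hclos.graph_closure_eq_closure_graph.symm
  -- P maps the graph of T into itself
  have hmaps : ∀ p ∈ (T.graph : Set (H × H)), (P p.1, P p.2) ∈ (T.graph : Set (H × H)) := by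
    intro p hp
    rcases T.mem_graph_iff.mp hp with ⟨x, hx1, hx2⟩
    have hx' : (x : H) ∈ (T.domain ⊓ Kpᗮ) ⊔ (T.domain ⊓ Kp) := by rw [← hdom]; exact x.2
    obtain ⟨a, ha, b, hb, hab⟩ := Submodule.mem_sup.mp hx'
    set xa : T.domain := ⟨a, ha.1⟩
    set xb : T.domain := ⟨b, hb.1⟩
    have hxsum : x = xa + xb := Subtype.ext (by simp [xa, xb, hab])
    have hPp1 : P p.1 = b := by
      rw [← hx1, ← hab, map_add, hPzero a ha.2, hPid b hb.2, zero_add]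
    have hPp2 : P p.2 = T xb := by
      rw [← hx2, hxsum, T.map_add, map_add, hPzero _ ((hinv xa).2 ha.2),
        hPid _ ((hinv xb).1 hb.2), zero_add]
    rw [hPp1, hPp2]
    exact T.mem_graph xb
  -- hence P maps the graph of the closure into itself
  have hmapsC : ∀ u : T.closure.domain,
      ((P (u : H), P (T.closure u)) ∈ T.closure.graph) := by
    intro u
    have hm : ((u : H), T.closure u) ∈ closure (T.graph : Set (H × H)) := by
      have h := T.closure.mem_graph u
      rw [hgraph, ← SetLike.mem_coe, Submodule.topologicalClosure_coe] at h
      exact h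
    have hcont : Continuous fun q : H × H => (P q.1, P q.2) :=
      (P.continuous.comp continuous_fst).prodMk (P.continuous.comp continuous_snd)
    have h2 := map_mem_closure hcont hm hmaps
    rw [hgraph, ← SetLike.mem_coe, Submodule.topologicalClosure_coe]
    exact h2
  -- the closure commutes with P on its domain
  have hPcomm : ∀ u : T.closure.domain, P (u : H) ∈ T.closure.domain ∧
      ∀ (h : P (u : H) ∈ T.closure.domain), T.closure ⟨P (u : H), h⟩ = P (T.closure u) := by
    intro u
    rcases T.closure.mem_graph_iff.mp (hmapsC u) with ⟨y, hy1, hy2⟩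
    have hy1' : (y : H) = P (u : H) := hy1
    refine ⟨hy1' ▸ y.2, fun h => ?_⟩
    have : (⟨P (u : H), h⟩ : T.closure.domain) = y := Subtype.ext hy1.symm
    rw [this, hy2]
  -- Part 1
  have part1 : ∀ u : T.closure.domain, ((u : H) ∈ Kp → T.closure u ∈ Kp) ∧
      ((u : H) ∈ Kpᗮ → T.closure u ∈ Kpᗮ) := by
    intro u
    constructor
    · intro hu
      have h1 := hmapsC u
      rw [hPid _ hu] at h1
      have h2 := T.closure.mem_graph u
      have h3 : ((0 : H), P (T.closure u) - T.closure u) ∈ T.closure.graph := by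
        have := T.closure.graph.sub_mem h1 h2
        simpa using this
      have h4 := T.closure.graph_fst_eq_zero_snd h3 rfl
      have h5 : P (T.closure u) = T.closure u := by
        have := sub_eq_zero.mp h4; exact this
      rw [← h5]; exact hPmem _
    · intro hu
      have h1 := hmapsC u
      rw [hPzero _ hu] at h1
      have h4 := T.closure.graph_fst_eq_zero_snd h1 rfl
      have := hPorth (T.closure u)
      rwa [h4, sub_zero] at this
  refine ⟨part1, ?_⟩
  -- Part 2
  intro u hu hderiv h0
  set w : ℝ → H := fun t => u t - P (u t) with hwdef
  have hwdom : ∀ t, w t ∈ T.closure.domain := fun t =>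
    T.closure.domain.sub_mem (hu t) (hPcomm ⟨u t, hu t⟩).1
  have hTcw : ∀ t, T.closure ⟨w t, hwdom t⟩ =
      T.closure ⟨u t, hu t⟩ - P (T.closure ⟨u t, hu t⟩) := by
    intro t
    have hsplit : (⟨w t, hwdom t⟩ : T.closure.domain) =
        ⟨u t, hu t⟩ - ⟨P (u t), (hPcomm ⟨u t, hu t⟩).1⟩ := Subtype.ext rfl
    rw [hsplit, T.closure.map_sub, (hPcomm ⟨u t, hu t⟩).2 _]
  -- derivative of w
  have hw' : ∀ t, HasDerivAt w (Complex.I • T.closure ⟨w t, hwdom t⟩) t := by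
    intro t
    have hPu : HasDerivAt (fun s => P (u s))
        (P (Complex.I • T.closure ⟨u t, hu t⟩)) t :=
      ((P.restrictScalars ℝ).hasFDerivAt).comp_hasDerivAt t (hderiv t)
    have hsub := (hderiv t).sub hPu
    convert hsub using 1
    · rfl
    rw [hTcw t, map_smul, smul_sub]
  -- the energy function
  set g : ℝ → ℝ := fun t => RCLike.re (inner ℂ (w t) (w t) : ℂ) with hgdef
  have hg' : ∀ t, HasDerivAt g 0 t := by
    intro t
    have hi := HasDerivAt.inner ℂ (hw' t) (hw' t)
    have hD : (inner ℂ (w t) (Complex.I • T.closure ⟨w t, hwdom t⟩) : ℂ) +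
        inner ℂ (Complex.I • T.closure ⟨w t, hwdom t⟩) (w t) = 0 := by
      have hsym := hsymmC ⟨w t, hwdom t⟩ ⟨w t, hwdom t⟩
      rw [inner_smul_right, inner_smul_left, hsym, Complex.conj_I]
      ring
    rw [hD] at hi
    have := (RCLike.reCLM (K := ℂ)).hasFDerivAt.comp_hasDerivAt t hi
    simpa [g, Function.comp_def] using this
  have hgconst : ∀ t, g t = g 0 := by
    intro t
    exact is_const_of_deriv_eq_zero (fun s => ((hg' s).differentiableAt))
      (fun s => (hg' s).deriv) t 0
  have hw0 : w 0 = 0 := by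
    simp only [hwdef, hPid _ h0, sub_self]
  intro t
  have hgt : g t = 0 := by
    rw [hgconst t, hgdef]
    simp [hw0]
  have hwt : w t = 0 := by
    have : RCLike.re (inner ℂ (w t) (w t) : ℂ) = ‖w t‖ ^ 2 := inner_self_eq_norm_sq (w t)
    rw [hgdef] at hgt
    simp only [this] at hgt
    have := pow_eq_zero_iff (n := 2) (by norm_num) |>.mp hgt
    exact norm_eq_zero.mp this
  have : u t = P (u t) := by
    have := sub_eq_zero.mp hwt
    exact this
  rw [this]
  exact hPmem _

end
end
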